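/- For any a₁,…,a_q ∈ ℕ and b₁,…,b_r ∈ ℕ (all bⱼ ≥ 2) satisfying the strong arithmetic condition with formal dimension n = 2(Σbⱼ − Σaᵢ) − (r−q) equal to 6, the possibilities are exactly: (a;b) ∈ {((); (2,2)), ((1); (4)), ((3); (6)), ((1,1); (2,3)), ((1,2); (2,4)), ((1,1,1); (2,2,2))}. -/

import Mathlib

/-- The strong arithmetic condition (SAC) of Friedlander–Halperin, for exponent
tuples given as lists: for every nonempty sublist `t` of `a` there is a sublist
`u` of `b` of the same length such that each entry of `u` is a nonnegative
integral combination of the entries of `t` with coefficient sum at least 2. -/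
def SAC (a b : List ℕ) : Prop :=
  ∀ t : List ℕ, t.Sublist a → t ≠ [] →
    ∃ u : List ℕ, u.Sublist b ∧ u.length = t.length ∧
      ∀ k : Fin u.length, ∃ γ : Fin t.length → ℕ,
        u.get k = ∑ l : Fin t.length, γ l * t.get l ∧ 2 ≤ ∑ l : Fin t.length, γ l

lemma sum_getD (l : List ℕ) (f : ℕ → ℕ) :
    ∑ i ∈ Finset.range l.length, f (l.getD i 0) = (l.map f).sum := by
  induction l with
  | nil => simp
  | cons x xs ih =>
    rw [List.length_cons, Finset.sum_range_succ']
    simp only [List.getD_cons_succ, List.getD_cons_zero, ih, List.map_cons, List.sum_cons]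
    omega

lemma map2sum (l : List ℕ) : (l.map (HMul.hMul 2)).sum = 2 * l.sum := by
  induction l with
  | nil => simp
  | cons x xs ih => simp [ih]; ring

lemma bfacts (b : List ℕ) (hb : ∀ x ∈ b, 2 ≤ x) :
    (b.map (fun x => 2 * x - 1)).sum + b.length = 2 * b.sum ∧
      3 * b.length ≤ (b.map (fun x => 2 * x - 1)).sum := by
  induction b with
  | nil => simp
  | cons x xs ih =>
    have hx : 2 ≤ x := hb x (by simp)
    have := ih (fun y hy => hb y (by simp [hy]))
    simp only [List.map_cons, List.sum_cons, List.length_cons]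
    omega

lemma alen (a : List ℕ) (ha : ∀ x ∈ a, 1 ≤ x) : a.length ≤ a.sum := by
  induction a with
  | nil => simp
  | cons x xs ih =>
    have h1 := ih (fun y hy => ha y (by simp [hy]))
    have h2 := ha x (by simp)
    simp only [List.length_cons, List.sum_cons]
    omega

lemma sac_single {a b : List ℕ} (h : SAC a b) {x : ℕ} (hx : x ∈ a) :
    ∃ y ∈ b, ∃ γ : ℕ, y = γ * x ∧ 2 ≤ γ ∧ 2 * x ≤ y := by
  obtain ⟨u, hu, hlen, hk⟩ := h [x] (List.singleton_sublist.mpr hx) (by simp)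
  have h1 : 0 < u.length := by simp [hlen]
  obtain ⟨γ, hγ1, hγ2⟩ := hk ⟨0, h1⟩
  simp [Fin.sum_univ_one] at hγ1 hγ2
  refine ⟨u.get ⟨0, h1⟩, hu.subset (u.get_mem _), γ ⟨0, by simp⟩, ?_, hγ2, ?_⟩
  · simpa using hγ1
  · have : u.get ⟨0, h1⟩ = γ ⟨0, by simp⟩ * x := by simpa using hγ1
    rw [this]
    exact Nat.mul_le_mul_right x hγ2

lemma perm_pair {b : List ℕ} {u v : ℕ} (h : b.Perm [u, v]) :
    b = [u, v] ∨ b = [v, u] := by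
  have hl := h.length_eq
  match b, hl with
  | [y1, y2], _ =>
    have hm : y1 = u ∨ y1 = v := by
      have := h.mem_iff.mp (show y1 ∈ [y1, y2] by simp)
      simpa using this
    rcases hm with rfl | rfl
    · left
      have h2 : [y2].Perm [v] := (List.perm_cons y1).mp h
      rw [List.perm_singleton] at h2
      rw [h2]
    · right
      have h' : (y1 :: [y2]).Perm (y1 :: [u]) :=
        h.trans (List.Perm.swap y1 u [])
      have h2 : [y2].Perm [u] := (List.perm_cons y1).mp h'
      rw [List.perm_singleton] at h2
      rw [h2]

lemma sac_nil (b : List ℕ) : SAC [] b := by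
  intro t ht hne
  cases List.sublist_nil.mp ht
  exact absurd rfl hne

lemma sac14 : SAC [1] [4] := by
  intro t ht hne
  have hm := List.mem_sublists.2 ht
  fin_cases hm
  · exact absurd rfl hne
  · refine ⟨[4], by decide, rfl, ?_⟩; intro k; fin_cases k; exact ⟨![4], by decide, by decide⟩

lemma sac36 : SAC [3] [6] := by
  intro t ht hne
  have hm := List.mem_sublists.2 ht
  fin_cases hm
  · exact absurd rfl hne
  · refine ⟨[6], by decide, rfl, ?_⟩; intro k; fin_cases k; exact ⟨![2], by decide, by decide⟩

lemma sac1123 : SAC [1,1] [2,3] := by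
  intro t ht hne
  have hm := List.mem_sublists.2 ht
  fin_cases hm
  · exact absurd rfl hne
  · refine ⟨[2], by decide, rfl, ?_⟩; intro k; fin_cases k; exact ⟨![2], by decide, by decide⟩
  · refine ⟨[2], by decide, rfl, ?_⟩; intro k; fin_cases k; exact ⟨![2], by decide, by decide⟩
  · refine ⟨[2,3], by decide, rfl, ?_⟩
    intro k; fin_cases k
    · exact ⟨![2,0], by decide, by decide⟩
    · exact ⟨![3,0], by decide, by decide⟩

lemma sac1132 : SAC [1,1] [3,2] := by
  intro t ht hne
  have hm := List.mem_sublists.2 ht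
  fin_cases hm
  · exact absurd rfl hne
  · refine ⟨[3], by decide, rfl, ?_⟩; intro k; fin_cases k; exact ⟨![3], by decide, by decide⟩
  · refine ⟨[3], by decide, rfl, ?_⟩; intro k; fin_cases k; exact ⟨![3], by decide, by decide⟩
  · refine ⟨[3,2], by decide, rfl, ?_⟩
    intro k; fin_cases k
    · exact ⟨![3,0], by decide, by decide⟩
    · exact ⟨![2,0], by decide, by decide⟩

lemma sac1224 : SAC [1,2] [2,4] := by
  intro t ht hne
  have hm := List.mem_sublists.2 ht
  fin_cases hm
  · exact absurd rfl hne
  · refine ⟨[2], by decide, rfl, ?_⟩; intro k; fin_cases k; exact ⟨![2], by decide, by decide⟩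
  · refine ⟨[4], by decide, rfl, ?_⟩; intro k; fin_cases k; exact ⟨![2], by decide, by decide⟩
  · refine ⟨[2,4], by decide, rfl, ?_⟩
    intro k; fin_cases k
    · exact ⟨![2,0], by decide, by decide⟩
    · exact ⟨![0,2], by decide, by decide⟩

lemma sac1242 : SAC [1,2] [4,2] := by
  intro t ht hne
  have hm := List.mem_sublists.2 ht
  fin_cases hm
  · exact absurd rfl hne
  · refine ⟨[4], by decide, rfl, ?_⟩; intro k; fin_cases k; exact ⟨![4], by decide, by decide⟩
  · refine ⟨[4], by decide, rfl, ?_⟩; intro k; fin_cases k; exact ⟨![2], by decide, by decide⟩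
  · refine ⟨[4,2], by decide, rfl, ?_⟩
    intro k; fin_cases k
    · exact ⟨![0,2], by decide, by decide⟩
    · exact ⟨![2,0], by decide, by decide⟩

lemma sac2124 : SAC [2,1] [2,4] := by
  intro t ht hne
  have hm := List.mem_sublists.2 ht
  fin_cases hm
  · exact absurd rfl hne
  · refine ⟨[4], by decide, rfl, ?_⟩; intro k; fin_cases k; exact ⟨![2], by decide, by decide⟩
  · refine ⟨[2], by decide, rfl, ?_⟩; intro k; fin_cases k; exact ⟨![2], by decide, by decide⟩
  · refine ⟨[2,4], by decide, rfl, ?_⟩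
    intro k; fin_cases k
    · exact ⟨![0,2], by decide, by decide⟩
    · exact ⟨![2,0], by decide, by decide⟩

lemma sac2142 : SAC [2,1] [4,2] := by
  intro t ht hne
  have hm := List.mem_sublists.2 ht
  fin_cases hm
  · exact absurd rfl hne
  · refine ⟨[4], by decide, rfl, ?_⟩; intro k; fin_cases k; exact ⟨![2], by decide, by decide⟩
  · refine ⟨[2], by decide, rfl, ?_⟩; intro k; fin_cases k; exact ⟨![2], by decide, by decide⟩
  · refine ⟨[4,2], by decide, rfl, ?_⟩
    intro k; fin_cases k
    · exact ⟨![2,0], by decide, by decide⟩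
    · exact ⟨![0,2], by decide, by decide⟩

lemma sac111 : SAC [1,1,1] [2,2,2] := by
  intro t ht hne
  have hm := List.mem_sublists.2 ht
  fin_cases hm
  · exact absurd rfl hne
  all_goals first
  | (refine ⟨[2], by decide, rfl, ?_⟩; intro k; fin_cases k; exact ⟨![2], by decide, by decide⟩)
  | (refine ⟨[2,2], by decide, rfl, ?_⟩; intro k; fin_cases k <;>
      exact ⟨![2,0], by decide, by decide⟩)
  | (refine ⟨[2,2,2], by decide, rfl, ?_⟩; intro k; fin_cases k <;>
      exact ⟨![2,0,0], by decide, by decide⟩)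

/-- Classification of the possible exponents in formal dimension 6. -/
theorem stmt_18 (a b : List ℕ) (ha : ∀ x ∈ a, 1 ≤ x) (hb : ∀ x ∈ b, 2 ≤ x) :
    (SAC a b ∧ a.length ≤ b.length ∧
      (∑ i ∈ Finset.range a.length, 2 * a.getD i 0) ≤ 6 ∧
      (∑ j ∈ Finset.range b.length, (2 * b.getD j 0 - 1)) ≤ 11 ∧
      (6 : ℤ) = 2 * ((b.sum : ℤ) - (a.sum : ℤ))
        - ((b.length : ℤ) - (a.length : ℤ))) ↔
    ((a.Perm [] ∧ b.Perm [2, 2]) ∨ (a.Perm [1] ∧ b.Perm [4]) ∨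
      (a.Perm [3] ∧ b.Perm [6]) ∨ (a.Perm [1, 1] ∧ b.Perm [2, 3]) ∨
      (a.Perm [1, 2] ∧ b.Perm [2, 4]) ∨ (a.Perm [1, 1, 1] ∧ b.Perm [2, 2, 2])) := by
  constructor
  · rintro ⟨hsac, hqr, hA6, hB11, hdim⟩
    rw [sum_getD a (fun x => 2 * x)] at hA6
    rw [sum_getD b (fun x => 2 * x - 1)] at hB11
    rw [map2sum] at hA6
    obtain ⟨hb1, hb2⟩ := bfacts b hb
    have hal := alen a ha
    have hkey : 2 * b.sum + a.length = 2 * a.sum + b.length + 6 := by omega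
    have hq3 : a.length ≤ 3 := by omega
    have hr3 : b.length ≤ 3 := by omega
    have hBs : 2 * b.sum ≤ 11 + b.length := by omega
    clear hdim hb1 hb2 hB11 hal
    rcases a with _ | ⟨x1, _ | ⟨x2, _ | ⟨x3, _ | ⟨x4, ar⟩⟩⟩⟩ <;>
      rcases b with _ | ⟨y1, _ | ⟨y2, _ | ⟨y3, _ | ⟨y4, br⟩⟩⟩⟩ <;>
        simp only [List.sum_cons, List.sum_nil, List.length_cons, List.length_nil,
          List.mem_cons, List.not_mem_nil, List.mem_singleton, forall_eq_or_imp,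
          forall_eq, List.forall_mem_nil] at hkey hA6 hBs hqr ha hb hq3 hr3 ⊢
    all_goals try omega
    -- case a = [], b = [y1, y2]
    · have h : y1 = 2 ∧ y2 = 2 := by omega
      obtain ⟨rfl, rfl⟩ := h
      exact Or.inl ⟨List.Perm.refl _, List.Perm.refl _⟩
    -- case a = [x1], b = [y1]
    · obtain ⟨c, hc, γ, h1, h2, h3⟩ := sac_single hsac (show x1 ∈ [x1] by simp)
      simp only [List.mem_singleton] at hc
      subst hc
      have hx3 : x1 ≤ 3 := by omega
      have hx1 : 1 ≤ x1 := ha.1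
      interval_cases x1
      · have h4 : c = 4 := by omega
        subst h4
        exact Or.inr (Or.inl ⟨List.Perm.refl _, List.Perm.refl _⟩)
      · exfalso; omega
      · have h6 : c = 6 := by omega
        subst h6
        exact Or.inr (Or.inr (Or.inl ⟨List.Perm.refl _, List.Perm.refl _⟩))
    -- case a = [x1], b = [y1, y2, y3]
    · exfalso
      obtain ⟨c, hc, γ, h1, h2, h3⟩ := sac_single hsac (show x1 ∈ [x1] by simp)
      simp only [List.mem_cons, List.mem_singleton, List.not_mem_nil, or_false] at hc
      rcases hc with rfl | rfl | rfl <;> omega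
    -- case a = [x1, x2], b = [y1, y2]
    · have hx : (x1 = 1 ∧ x2 = 1) ∨ (x1 = 1 ∧ x2 = 2) ∨ (x1 = 2 ∧ x2 = 1) := by omega
      rcases hx with ⟨rfl, rfl⟩ | ⟨rfl, rfl⟩ | ⟨rfl, rfl⟩
      · have h : (y1 = 2 ∧ y2 = 3) ∨ (y1 = 3 ∧ y2 = 2) := by omega
        rcases h with ⟨rfl, rfl⟩ | ⟨rfl, rfl⟩
        · exact Or.inr (Or.inr (Or.inr (Or.inl ⟨List.Perm.refl _, List.Perm.refl _⟩)))
        · exact Or.inr (Or.inr (Or.inr (Or.inl ⟨List.Perm.refl _, by decide⟩)))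
      · obtain ⟨c, hc, γ, h1, h2, h3⟩ := sac_single hsac (show 2 ∈ [1, 2] by simp)
        simp only [List.mem_cons, List.mem_singleton, List.not_mem_nil, or_false] at hc
        have h : (y1 = 2 ∧ y2 = 4) ∨ (y1 = 4 ∧ y2 = 2) := by
          rcases hc with rfl | rfl <;> omega
        rcases h with ⟨rfl, rfl⟩ | ⟨rfl, rfl⟩
        · exact Or.inr (Or.inr (Or.inr (Or.inr (Or.inl ⟨List.Perm.refl _, List.Perm.refl _⟩))))
        · exact Or.inr (Or.inr (Or.inr (Or.inr (Or.inl ⟨List.Perm.refl _, by decide⟩))))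
      · obtain ⟨c, hc, γ, h1, h2, h3⟩ := sac_single hsac (show 2 ∈ [2, 1] by simp)
        simp only [List.mem_cons, List.mem_singleton, List.not_mem_nil, or_false] at hc
        have h : (y1 = 2 ∧ y2 = 4) ∨ (y1 = 4 ∧ y2 = 2) := by
          rcases hc with rfl | rfl <;> omega
        rcases h with ⟨rfl, rfl⟩ | ⟨rfl, rfl⟩
        · exact Or.inr (Or.inr (Or.inr (Or.inr (Or.inl ⟨by decide, List.Perm.refl _⟩))))
        · exact Or.inr (Or.inr (Or.inr (Or.inr (Or.inl ⟨by decide, by decide⟩))))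
    -- case a = [x1, x2, x3], b = [y1, y2, y3]
    · have h : x1 = 1 ∧ x2 = 1 ∧ x3 = 1 ∧ y1 = 2 ∧ y2 = 2 ∧ y3 = 2 := by omega
      obtain ⟨rfl, rfl, rfl, rfl, rfl, rfl⟩ := h
      exact Or.inr (Or.inr (Or.inr (Or.inr (Or.inr ⟨List.Perm.refl _, List.Perm.refl _⟩))))
  · rintro (⟨h1, h2⟩ | ⟨h1, h2⟩ | ⟨h1, h2⟩ | ⟨h1, h2⟩ | ⟨h1, h2⟩ | ⟨h1, h2⟩)
    · rw [List.perm_nil] at h1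
      subst h1
      have h2' : b = List.replicate 2 2 := List.perm_replicate.mp (by simpa using h2)
      subst h2'
      exact ⟨sac_nil _, by decide, by decide, by decide, by decide⟩
    · rw [List.perm_singleton] at h1 h2
      subst h1; subst h2
      exact ⟨sac14, by decide, by decide, by decide, by decide⟩
    · rw [List.perm_singleton] at h1 h2
      subst h1; subst h2
      exact ⟨sac36, by decide, by decide, by decide, by decide⟩
    · have h1' : a = List.replicate 2 1 := List.perm_replicate.mp (by simpa using h1)
      subst h1'
      rcases perm_pair h2 with rfl | rfl
      · exact ⟨sac1123, by decide, by decide, by decide, by decide⟩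
      · exact ⟨sac1132, by decide, by decide, by decide, by decide⟩
    · rcases perm_pair h1 with rfl | rfl <;> rcases perm_pair h2 with rfl | rfl
      · exact ⟨sac1224, by decide, by decide, by decide, by decide⟩
      · exact ⟨sac1242, by decide, by decide, by decide, by decide⟩
      · exact ⟨sac2124, by decide, by decide, by decide, by decide⟩
      · exact ⟨sac2142, by decide, by decide, by decide, by decide⟩
    · have h1' : a = List.replicate 3 1 := List.perm_replicate.mp (by simpa using h1)
      have h2' : b = List.replicate 3 2 := List.perm_replicate.mp (by simpa using h2)
      subst h1'; subst h2'
      exact ⟨sac111, by decide, by decide, by decide, by decide⟩
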